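/- arXiv:2208.04536 — 4 statements merged into one kernel-verified Lean document; each statement's English description precedes it below -/
import Mathlib

section
/- Let ((X, V), (U, Y)) be a twin cotorsion pair in an extriangulated category B such that (X, Y) is a cotorsion pair in a thick subcategory S of B. Then S_R = S_L = S, where S_L (resp. S_R) is the class of objects B admitting an E-triangle Y' → X' → B ⤳ (resp. B → Y' → X' ⤳) with X' ∈ X, Y' ∈ Y. In particular ((X,V),(U,Y)) is a Hovey twin cotorsion pair. -/
open CategoryTheory CategoryTheory.Limits

universe w v u

/-- The basic data of an extriangulated structure (in the sense of Nakaoka–Palu)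
on an additive category `C`: an `E`-extension group `E X A` for every pair of
objects (contravariant in the first variable, covariant in the second), and the
class of `𝔼`-triangles `A ⟶ B ⟶ X` (sequences realizing some `𝔼`-extension),
together with two basic consequences of the Nakaoka–Palu axioms. -/
structure ExtStruct (C : Type u) [Category.{v} C] [Preadditive C] where
  /-- `E X A` is the abelian group of `𝔼`-extensions of `X` by `A`. -/
  E : C → C → AddCommGrpCat.{w}
  /-- `IsTri f g` states that `A ⟶ B ⟶ X` is an `𝔼`-triangle. -/
  IsTri : ∀ {A B X : C}, (A ⟶ B) → (B ⟶ X) → Prop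
  /-- In an `𝔼`-triangle the composition vanishes. -/
  tri_comp_zero : ∀ {A B X : C} (f : A ⟶ B) (g : B ⟶ X), IsTri f g → f ≫ g = 0
  /-- Every `𝔼`-extension is realized by some `𝔼`-triangle. -/
  tri_realize : ∀ {A X : C}, (E X A) → ∃ (B : C) (f : A ⟶ B) (g : B ⟶ X), IsTri f g

namespace ExtStruct

variable {C : Type u} [Category.{v} C] [Preadditive C] (S : ExtStruct.{w} C)

/-- `𝔼(U, V) = 0` : all extension groups `E X A` with `X ∈ U`, `A ∈ V` vanish. -/
def ExtVanish (U V : Set C) : Prop :=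
  ∀ X ∈ U, ∀ A ∈ V, ∀ δ : S.E X A, δ = 0

/-- A morphism is an inflation if it occurs as the first map of an `𝔼`-triangle. -/
def Inflation {A B : C} (f : A ⟶ B) : Prop := ∃ (X : C) (g : B ⟶ X), S.IsTri f g

/-- A morphism is a deflation if it occurs as the second map of an `𝔼`-triangle. -/
def Deflation {B X : C} (g : B ⟶ X) : Prop := ∃ (A : C) (f : A ⟶ B), S.IsTri f g

/-- Condition (WIC) of Nakaoka–Palu. -/
def WIC : Prop :=
  (∀ {A B X : C} (f : A ⟶ B) (g : B ⟶ X), S.Deflation (f ≫ g) → S.Deflation g) ∧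
  (∀ {A B X : C} (f : A ⟶ B) (g : B ⟶ X), S.Inflation (f ≫ g) → S.Inflation f)

/-- Projective objects of the extriangulated category. -/
def Projective (P : C) : Prop :=
  ∀ ⦃A B X : C⦄ (f : A ⟶ B) (g : B ⟶ X), S.IsTri f g →
    ∀ c : P ⟶ X, ∃ b : P ⟶ B, b ≫ g = c

/-- Injective objects of the extriangulated category. -/
def Injective (I : C) : Prop :=
  ∀ ⦃A B X : C⦄ (f : A ⟶ B) (g : B ⟶ X), S.IsTri f g →
    ∀ a : A ⟶ I, ∃ b : B ⟶ I, f ≫ b = a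

/-- `M` is closed under extensions. -/
def ExtensionClosed (M : Set C) : Prop :=
  ∀ ⦃A B X : C⦄ (f : A ⟶ B) (g : B ⟶ X), S.IsTri f g → A ∈ M → X ∈ M → B ∈ M

/-- `M` is closed under taking cones of `𝔼`-triangles. -/
def ConesClosed (M : Set C) : Prop :=
  ∀ ⦃A B X : C⦄ (f : A ⟶ B) (g : B ⟶ X), S.IsTri f g → A ∈ M → B ∈ M → X ∈ M

/-- `M` is closed under taking cocones of `𝔼`-triangles. -/
def CoconesClosed (M : Set C) : Prop :=
  ∀ ⦃A B X : C⦄ (f : A ⟶ B) (g : B ⟶ X), S.IsTri f g → B ∈ M → X ∈ M → A ∈ M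

end ExtStruct

variable {C : Type u} [Category.{v} C] [Preadditive C]

/-- A class of objects is closed under direct summands (retracts). -/
def IsSummandClosed (U : Set C) : Prop :=
  ∀ ⦃A B : C⦄, B ∈ U → (∃ (i : A ⟶ B) (p : B ⟶ A), i ≫ p = 𝟙 A) → A ∈ U

/-- `f` factors through an object of the class `W`. -/
def FactorsThru (W : Set C) {A B : C} (f : A ⟶ B) : Prop :=
  ∃ (W' : C) (a : A ⟶ W') (b : W' ⟶ B), W' ∈ W ∧ a ≫ b = f

/-- `(U, V)` is a cotorsion pair in the extriangulated category `(C, S)`. -/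
structure IsCotorsionPair (S : ExtStruct.{w} C) (U V : Set C) : Prop where
  summands_fst : IsSummandClosed U
  summands_snd : IsSummandClosed V
  ext_vanish : S.ExtVanish U V
  approx_fst : ∀ B : C, ∃ (VB UB : C) (f : VB ⟶ UB) (g : UB ⟶ B),
      VB ∈ V ∧ UB ∈ U ∧ S.IsTri f g
  approx_snd : ∀ B : C, ∃ (VB UB : C) (f : B ⟶ VB) (g : VB ⟶ UB),
      VB ∈ V ∧ UB ∈ U ∧ S.IsTri f g

/-- `((X, V), (U, Y))` is a twin cotorsion pair. -/
structure IsTwinCotorsionPair (S : ExtStruct.{w} C) (X V U Y : Set C) : Prop where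
  fst : IsCotorsionPair S X V
  snd : IsCotorsionPair S U Y
  subset : X ⊆ U

/-- `(X, Y)` is a cotorsion pair in the extension closed subcategory `M`
(with its inherited extriangulated structure). -/
structure IsCotorsionPairIn (S : ExtStruct.{w} C) (M : Set C) (X Y : Set C) : Prop where
  subset_fst : X ⊆ M
  subset_snd : Y ⊆ M
  summands_fst : ∀ ⦃A B : C⦄, A ∈ M → B ∈ X →
      (∃ (i : A ⟶ B) (p : B ⟶ A), i ≫ p = 𝟙 A) → A ∈ X
  summands_snd : ∀ ⦃A B : C⦄, A ∈ M → B ∈ Y →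
      (∃ (i : A ⟶ B) (p : B ⟶ A), i ≫ p = 𝟙 A) → A ∈ Y
  ext_vanish : S.ExtVanish X Y
  approx_fst : ∀ B ∈ M, ∃ (YB XB : C) (f : YB ⟶ XB) (g : XB ⟶ B),
      YB ∈ Y ∧ XB ∈ X ∧ S.IsTri f g
  approx_snd : ∀ B ∈ M, ∃ (YB XB : C) (f : B ⟶ YB) (g : YB ⟶ XB),
      YB ∈ Y ∧ XB ∈ X ∧ S.IsTri f g

/-- `S_L`: objects `B` admitting an `𝔼`-triangle `Y' → X' → B ⤳` with
`X' ∈ X`, `Y' ∈ Y`. -/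
def SLm (S : ExtStruct.{w} C) (X Y : Set C) : Set C :=
  {B | ∃ (Y' X' : C) (f : Y' ⟶ X') (g : X' ⟶ B), Y' ∈ Y ∧ X' ∈ X ∧ S.IsTri f g}

/-- `S_R`: objects `B` admitting an `𝔼`-triangle `B → Y' → X' ⤳` with
`X' ∈ X`, `Y' ∈ Y`. -/
def SRm (S : ExtStruct.{w} C) (X Y : Set C) : Set C :=
  {B | ∃ (Y' X' : C) (f : B ⟶ Y') (g : Y' ⟶ X'), Y' ∈ Y ∧ X' ∈ X ∧ S.IsTri f g}

/-- A thick subcategory: closed under direct summands and satisfying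
two-out-of-three for `𝔼`-triangles. -/
def IsThick (S : ExtStruct.{w} C) (M : Set C) : Prop :=
  IsSummandClosed M ∧ S.ExtensionClosed M ∧ S.ConesClosed M ∧ S.CoconesClosed M

/-- A cotorsion pair `(U, V)` is hereditary when `U` is closed under cocones and
`V` is closed under cones. -/
def IsHereditaryPair (S : ExtStruct.{w} C) (U V : Set C) : Prop :=
  S.CoconesClosed U ∧ S.ConesClosed V

/-- The class `R` of morphisms `f : B ⟶ C` admitting an `𝔼`-triangle
`B →f C → S' ⤳` with `S' ∈ M`; the Gabriel–Zisman localization `B/S` is the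
localization of `C` at this class. -/
def RClass (S : ExtStruct.{w} C) (M : Set C) : MorphismProperty C :=
  fun _ _ f => ∃ (S' : C) (g : _ ⟶ S'), S' ∈ M ∧ S.IsTri f g
/-- Lemma 2.16: if `(X, Y)` is a cotorsion pair in a thick subcategory `S`,
then `S_R = S_L = S`; in particular the twin cotorsion pair
`((X, V), (U, Y))` is Hovey. -/
theorem cotorsionPairIn_thick_SR_eq_SL_eq (S : ExtStruct.{w} C) (X V U Y Sset : Set C)
    (htw : IsTwinCotorsionPair S X V U Y)
    (hthick : IsThick S Sset) (hctp : IsCotorsionPairIn S Sset X Y) :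
    SRm S X Y = Sset ∧ SLm S X Y = Sset := by
  obtain ⟨hsum, hext, hcone, hcocone⟩ := hthick
  constructor
  · ext B
    constructor
    · rintro ⟨Y', X', f, g, hY, hX, ht⟩
      exact hcocone f g ht (hctp.subset_snd hY) (hctp.subset_fst hX)
    · intro hB
      obtain ⟨YB, XB, f, g, hY, hX, ht⟩ := hctp.approx_snd B hB
      exact ⟨YB, XB, f, g, hY, hX, ht⟩
  · ext B
    constructor
    · rintro ⟨Y', X', f, g, hY, hX, ht⟩
      exact hcone f g ht (hctp.subset_snd hY) (hctp.subset_fst hX)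
    · intro hB
      obtain ⟨YB, XB, f, g, hY, hX, ht⟩ := hctp.approx_fst B hB
      exact ⟨YB, XB, f, g, hY, hX, ht⟩
end

section
/- Let B be a Krull-Schmidt extriangulated category satisfying (WIC) and C a full subcategory closed under direct summands. If f : C → B is a right C-approximation of B which is a deflation, then there exists a deflation f₁ : C₁ → B which is a minimal right C-approximation of B. Dually for left approximations and inflations. -/
open CategoryTheory CategoryTheory.Limits

universe w v u

variable {C : Type u} [Category.{v} C] [Preadditive C]

section MinimalApproxAux

open Module

variable (k : Type*) [Field k] [CategoryTheory.Linear k C]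
variable [∀ A B : C, Module.Finite k (A ⟶ B)]

include k

/-- Fitting-type lemma: for an endomorphism `S` of a finite-dimensional vector
space, some power of `S` gives a direct sum decomposition `ker ⊕ range`. -/
lemma fitting_aux {M : Type*} [AddCommGroup M] [Module k M] [Module.Finite k M]
    (S : Module.End k M) :
    ∃ n : ℕ, 1 ≤ n ∧
      LinearMap.ker (S ^ n) ⊓ LinearMap.range (S ^ n) = ⊥ ∧
      LinearMap.ker (S ^ n) ⊔ LinearMap.range (S ^ n) = ⊤ := by
  have hmono : ∀ m l : ℕ, LinearMap.range (S ^ (m + l)) ≤ LinearMap.range (S ^ m) := by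
    intro m l
    rw [pow_add]
    exact LinearMap.range_comp_le_range (S ^ l) (S ^ m)
  set g : ℕ → ℕ := fun n => finrank k (LinearMap.range (S ^ n)) with hg
  have hanti : ∀ a b : ℕ, a ≤ b → g b ≤ g a := by
    intro a b hab
    have h := Submodule.finrank_mono (hmono a (b - a))
    rwa [Nat.add_sub_cancel' hab] at h
  obtain ⟨m, hm⟩ : ∃ m : ℕ, ∀ l : ℕ, g m ≤ g l := by
    have hmem : sInf (Set.range g) ∈ Set.range g := Nat.sInf_mem ⟨g 0, 0, rfl⟩
    obtain ⟨m, hm⟩ := hmem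
    exact ⟨m, fun l => hm ▸ Nat.sInf_le ⟨l, rfl⟩⟩
  set n := m + 1 with hn
  have hgn : g n = g m := le_antisymm (hanti m n (by omega)) (hm n)
  have hgnn : g (n + n) = g m := le_antisymm (hanti m (n + n) (by omega)) (hm (n + n))
  have hrange_eq : LinearMap.range (S ^ (n + n)) = LinearMap.range (S ^ n) :=
    Submodule.eq_of_le_of_finrank_le (hmono n n) (by
      show g n ≤ g (n + n); omega)
  have hker_le : LinearMap.ker (S ^ n) ≤ LinearMap.ker (S ^ (n + n)) := by
    intro x hx
    rw [LinearMap.mem_ker] at hx ⊢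
    rw [pow_add, Module.End.mul_apply, hx, map_zero]
  have hkfr := LinearMap.finrank_range_add_finrank_ker (S ^ n)
  have hkfr2 := LinearMap.finrank_range_add_finrank_ker (S ^ (n + n))
  rw [hrange_eq] at hkfr2
  have hker_eq : LinearMap.ker (S ^ n) = LinearMap.ker (S ^ (n + n)) :=
    Submodule.eq_of_le_of_finrank_le hker_le (by omega)
  refine ⟨n, by omega, ?_, ?_⟩
  · apply (Submodule.eq_bot_iff _).2
    intro x hx
    obtain ⟨hxk, hxr⟩ := Submodule.mem_inf.1 hx
    obtain ⟨y, hy⟩ := hxr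
    have hymem : y ∈ LinearMap.ker (S ^ (n + n)) := by
      rw [LinearMap.mem_ker, pow_add, Module.End.mul_apply, hy]
      exact LinearMap.mem_ker.1 hxk
    rw [← hker_eq, LinearMap.mem_ker] at hymem
    rw [← hy, hymem]
  · apply Submodule.eq_top_iff'.2
    intro x
    have hx : (S ^ n) x ∈ LinearMap.range (S ^ (n + n)) :=
      hrange_eq ▸ LinearMap.mem_range_self _ x
    obtain ⟨z, hz⟩ := hx
    rw [pow_add, Module.End.mul_apply] at hz
    apply Submodule.mem_sup.2
    refine ⟨x - (S ^ n) z, ?_, (S ^ n) z, LinearMap.mem_range_self _ z, by abel⟩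
    rw [LinearMap.mem_ker, map_sub, hz, sub_self]

/-- If `C₁` is a direct summand of `Cc` realized by a non-identity idempotent,
then `End C₁` has strictly smaller dimension than `End Cc`. -/
lemma finrank_lt_of_retract {C₁ Cc : C} (a : C₁ ⟶ Cc) (b : Cc ⟶ C₁)
    (hab : a ≫ b = 𝟙 C₁) {π : Cc ⟶ Cc} (hba : b ≫ a = π) (hπ : π ≠ 𝟙 Cc) :
    finrank k (C₁ ⟶ C₁) < finrank k (Cc ⟶ Cc) := by
  set ψ : (C₁ ⟶ C₁) →ₗ[k] (Cc ⟶ Cc) :=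
    (Linear.leftComp k Cc b).comp (Linear.rightComp k C₁ a) with hψdef
  have hψ : ∀ φ : C₁ ⟶ C₁, ψ φ = b ≫ (φ ≫ a) := fun _ => rfl
  have hretr : ∀ φ : C₁ ⟶ C₁, a ≫ (ψ φ) ≫ b = φ := by
    intro φ
    rw [hψ]
    calc a ≫ (b ≫ φ ≫ a) ≫ b = (a ≫ b) ≫ φ ≫ (a ≫ b) := by
          simp only [Category.assoc]
    _ = φ := by rw [hab]; simp
  have hinj : Function.Injective ψ := by
    intro φ φ' hφφ
    rw [← hretr φ, ← hretr φ', hφφ]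
  have hrange : LinearMap.range ψ ≠ ⊤ := by
    intro htop
    obtain ⟨φ, hφ⟩ := LinearMap.range_eq_top.1 htop (𝟙 Cc)
    apply hπ
    have hfix : π ≫ ψ φ = ψ φ := by
      rw [hψ, ← hba]
      calc (b ≫ a) ≫ b ≫ φ ≫ a = b ≫ (a ≫ b) ≫ φ ≫ a := by
            simp only [Category.assoc]
      _ = b ≫ φ ≫ a := by rw [hab, Category.id_comp]
    have hπeq : π = ψ φ := by rw [← hfix, hφ, Category.comp_id]
    exact hπeq.trans hφ
  have h1 : finrank k (C₁ ⟶ C₁) = finrank k (LinearMap.range ψ) :=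
    (LinearMap.finrank_range_of_inj hinj).symm
  rw [h1]
  exact Submodule.finrank_lt hrange

/-- Produce a non-identity idempotent absorbing `f` on the right-approximation
side, from a non-invertible endomorphism fixing `f`. -/
lemma step_right {B Cc : C} (f : Cc ⟶ B) (e : Cc ⟶ Cc) (he : e ≫ f = f)
    (hne : ¬ IsIso e) :
    ∃ π : Cc ⟶ Cc, π ≫ π = π ∧ π ≫ f = f ∧ π ≠ 𝟙 Cc := by
  set S : Module.End k (Cc ⟶ Cc) := Linear.rightComp k Cc e with hSdef
  have hSapp : ∀ x : Cc ⟶ Cc, S x = x ≫ e := fun _ => rfl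
  have hSnf : ∀ (p : ℕ) (x : Cc ⟶ Cc), ((S ^ p) x) ≫ f = x ≫ f := by
    intro p
    induction p with
    | zero => intro x; simp
    | succ p ihp =>
      intro x
      rw [pow_succ, Module.End.mul_apply, hSapp, ihp, Category.assoc, he]
  have hScomp : ∀ (p : ℕ) (a x : Cc ⟶ Cc), (S ^ p) (a ≫ x) = a ≫ (S ^ p) x := by
    intro p
    induction p with
    | zero => intro a x; simp
    | succ p ihp =>
      intro a x
      simp only [pow_succ, Module.End.mul_apply, hSapp, Category.assoc, ihp]
  have hSfac : ∀ p : ℕ, (S ^ (p + 1)) (𝟙 Cc) = ((S ^ p) (𝟙 Cc)) ≫ e := by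
    intro p
    rw [pow_succ', Module.End.mul_apply, hSapp]
  obtain ⟨n, hn1, hinf, hsup⟩ := fitting_aux k S
  have h1 : (𝟙 Cc) ∈ LinearMap.ker (S ^ n) ⊔ LinearMap.range (S ^ n) :=
    hsup ▸ Submodule.mem_top
  obtain ⟨u, hu, v, hv, huv⟩ := Submodule.mem_sup.1 h1
  obtain ⟨w, hw⟩ := hv
  have hu0 : (S ^ n) u = 0 := LinearMap.mem_ker.1 hu
  have huf : u ≫ f = 0 := by rw [← hSnf n u, hu0, Limits.zero_comp]
  have hvf : v ≫ f = f := by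
    have h2 : u ≫ f + v ≫ f = f := by
      rw [← Preadditive.add_comp, huv, Category.id_comp]
    rwa [huf, zero_add] at h2
  have hvrange : v ∈ LinearMap.range (S ^ n) := ⟨w, hw⟩
  have hvu : v ≫ u = 0 := by
    have hmem : v ≫ u ∈ LinearMap.ker (S ^ n) ⊓ LinearMap.range (S ^ n) := by
      apply Submodule.mem_inf.2
      constructor
      · rw [LinearMap.mem_ker, hScomp, hu0, Limits.comp_zero]
      · have hvv : v ≫ v ∈ LinearMap.range (S ^ n) :=
          ⟨v ≫ w, by rw [hScomp, hw]⟩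
        have h3 : v ≫ u = v - v ≫ v := by
          have h4 : v ≫ u + v ≫ v = v := by
            rw [← Preadditive.comp_add, huv, Category.comp_id]
          exact eq_sub_of_add_eq h4
        rw [h3]
        exact Submodule.sub_mem _ hvrange hvv
    rw [hinf] at hmem
    exact (Submodule.mem_bot k).1 hmem
  have hvv : v ≫ v = v := by
    have h4 : v ≫ u + v ≫ v = v := by
      rw [← Preadditive.comp_add, huv, Category.comp_id]
    rwa [hvu, zero_add] at h4
  refine ⟨v, hvv, hvf, ?_⟩
  intro hveq
  apply hne
  have hw' : v = w ≫ (S ^ n) (𝟙 Cc) := by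
    rw [← hScomp, Category.comp_id, hw]
  obtain ⟨p, hp⟩ : ∃ p, n = p + 1 := ⟨n - 1, by omega⟩
  set t : Cc ⟶ Cc := w ≫ (S ^ p) (𝟙 Cc) with ht
  have hte : t ≫ e = 𝟙 Cc := by
    rw [ht, Category.assoc, ← hSfac, ← hp, ← hw', hveq]
  have hsurj : Function.Surjective S := by
    intro y
    exact ⟨y ≫ t, by rw [hSapp, Category.assoc, hte, Category.comp_id]⟩
  have hinj : Function.Injective S := LinearMap.injective_iff_surjective.2 hsurj
  have het : e ≫ t = 𝟙 Cc := by
    apply hinj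
    rw [hSapp, hSapp, Category.assoc, hte, Category.comp_id, Category.id_comp]
  exact ⟨t, het, hte⟩

/-- Dual of `step_right`, for left approximations. -/
lemma step_left {B Cc : C} (f : B ⟶ Cc) (e : Cc ⟶ Cc) (he : f ≫ e = f)
    (hne : ¬ IsIso e) :
    ∃ π : Cc ⟶ Cc, π ≫ π = π ∧ f ≫ π = f ∧ π ≠ 𝟙 Cc := by
  set S : Module.End k (Cc ⟶ Cc) := Linear.leftComp k Cc e with hSdef
  have hSapp : ∀ x : Cc ⟶ Cc, S x = e ≫ x := fun _ => rfl
  have hSnf : ∀ (p : ℕ) (x : Cc ⟶ Cc), f ≫ ((S ^ p) x) = f ≫ x := by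
    intro p
    induction p with
    | zero => intro x; simp
    | succ p ihp =>
      intro x
      rw [pow_succ, Module.End.mul_apply, hSapp, ihp, ← Category.assoc, he]
  have hScomp : ∀ (p : ℕ) (x a : Cc ⟶ Cc), (S ^ p) (x ≫ a) = ((S ^ p) x) ≫ a := by
    intro p
    induction p with
    | zero => intro x a; simp
    | succ p ihp =>
      intro x a
      simp only [pow_succ, Module.End.mul_apply, hSapp, ← Category.assoc, ihp]
  have hSfac : ∀ p : ℕ, (S ^ (p + 1)) (𝟙 Cc) = e ≫ ((S ^ p) (𝟙 Cc)) := by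
    intro p
    rw [pow_succ', Module.End.mul_apply, hSapp]
  obtain ⟨n, hn1, hinf, hsup⟩ := fitting_aux k S
  have h1 : (𝟙 Cc) ∈ LinearMap.ker (S ^ n) ⊔ LinearMap.range (S ^ n) :=
    hsup ▸ Submodule.mem_top
  obtain ⟨u, hu, v, hv, huv⟩ := Submodule.mem_sup.1 h1
  obtain ⟨w, hw⟩ := hv
  have hu0 : (S ^ n) u = 0 := LinearMap.mem_ker.1 hu
  have huf : f ≫ u = 0 := by rw [← hSnf n u, hu0, Limits.comp_zero]
  have hvf : f ≫ v = f := by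
    have h2 : f ≫ u + f ≫ v = f := by
      rw [← Preadditive.comp_add, huv, Category.comp_id]
    rwa [huf, zero_add] at h2
  have hvrange : v ∈ LinearMap.range (S ^ n) := ⟨w, hw⟩
  have hvu : u ≫ v = 0 := by
    have hmem : u ≫ v ∈ LinearMap.ker (S ^ n) ⊓ LinearMap.range (S ^ n) := by
      apply Submodule.mem_inf.2
      constructor
      · rw [LinearMap.mem_ker, hScomp, hu0, Limits.zero_comp]
      · have hvv : v ≫ v ∈ LinearMap.range (S ^ n) :=
          ⟨w ≫ v, by rw [hScomp, hw]⟩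
        have h3 : u ≫ v = v - v ≫ v := by
          have h4 : u ≫ v + v ≫ v = v := by
            rw [← Preadditive.add_comp, huv, Category.id_comp]
          exact eq_sub_of_add_eq h4
        rw [h3]
        exact Submodule.sub_mem _ hvrange hvv
    rw [hinf] at hmem
    exact (Submodule.mem_bot k).1 hmem
  have hvv : v ≫ v = v := by
    have h4 : u ≫ v + v ≫ v = v := by
      rw [← Preadditive.add_comp, huv, Category.id_comp]
    rwa [hvu, zero_add] at h4
  refine ⟨v, hvv, hvf, ?_⟩
  intro hveq
  apply hne
  have hw' : v = (S ^ n) (𝟙 Cc) ≫ w := by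
    rw [← hScomp, Category.id_comp, hw]
  obtain ⟨p, hp⟩ : ∃ p, n = p + 1 := ⟨n - 1, by omega⟩
  set t : Cc ⟶ Cc := (S ^ p) (𝟙 Cc) ≫ w with ht
  have het : e ≫ t = 𝟙 Cc := by
    rw [ht, ← Category.assoc, ← hSfac, ← hp, ← hw', hveq]
  have hsurj : Function.Surjective S := by
    intro y
    exact ⟨t ≫ y, by rw [hSapp, ← Category.assoc, het, Category.id_comp]⟩
  have hinj : Function.Injective S := LinearMap.injective_iff_surjective.2 hsurj
  have hte : t ≫ e = 𝟙 Cc := by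
    apply hinj
    rw [hSapp, hSapp, ← Category.assoc, het, Category.id_comp, Category.comp_id]
  exact ⟨t, het, hte⟩

variable [IsIdempotentComplete C]

/-- Induction on `finrank End` : right approximation side. -/
lemma right_aux (S : ExtStruct.{w} C) (hwic : S.WIC) (𝒞 : Set C)
    (hc : IsSummandClosed 𝒞) (N : ℕ) :
    ∀ {B Cc : C}, finrank k (Cc ⟶ Cc) < N → Cc ∈ 𝒞 → ∀ f : Cc ⟶ B,
      (∀ D ∈ 𝒞, ∀ g : D ⟶ B, ∃ h : D ⟶ Cc, h ≫ f = g) → S.Deflation f →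
      ∃ (C₁ : C) (f₁ : C₁ ⟶ B), C₁ ∈ 𝒞 ∧ S.Deflation f₁ ∧
        (∀ D ∈ 𝒞, ∀ g : D ⟶ B, ∃ h : D ⟶ C₁, h ≫ f₁ = g) ∧
        (∀ e : C₁ ⟶ C₁, e ≫ f₁ = f₁ → IsIso e) := by
  induction N with
  | zero => intro B Cc h; omega
  | succ N ih =>
    intro B Cc hN hCc f happrox hdefl
    by_cases hmin : ∀ e : Cc ⟶ Cc, e ≫ f = f → IsIso e
    · exact ⟨Cc, f, hCc, hdefl, happrox, hmin⟩
    · push_neg at hmin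
      obtain ⟨e, he, hne⟩ := hmin
      obtain ⟨π, hππ, hπf, hπ1⟩ := step_right k f e he hne
      obtain ⟨C₁, s, r, hsr, hrs⟩ :=
        IsIdempotentComplete.idempotents_split Cc π hππ
      have hC₁ : C₁ ∈ 𝒞 := hc hCc ⟨s, r, hsr⟩
      have hlt : finrank k (C₁ ⟶ C₁) < finrank k (Cc ⟶ Cc) :=
        finrank_lt_of_retract k s r hsr hrs hπ1
      have hfeq : r ≫ (s ≫ f) = f := by
        rw [← Category.assoc, hrs, hπf]
      refine ih (by omega) hC₁ (s ≫ f) ?_ ?_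
      · intro D hD g
        obtain ⟨h, hh⟩ := happrox D hD g
        exact ⟨h ≫ r, by rw [Category.assoc, hfeq, hh]⟩
      · exact hwic.1 r (s ≫ f) (by rw [hfeq]; exact hdefl)

/-- Induction on `finrank End` : left approximation side. -/
lemma left_aux (S : ExtStruct.{w} C) (hwic : S.WIC) (𝒞 : Set C)
    (hc : IsSummandClosed 𝒞) (N : ℕ) :
    ∀ {B Cc : C}, finrank k (Cc ⟶ Cc) < N → Cc ∈ 𝒞 → ∀ f : B ⟶ Cc,
      (∀ D ∈ 𝒞, ∀ g : B ⟶ D, ∃ h : Cc ⟶ D, f ≫ h = g) → S.Inflation f →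
      ∃ (C₁ : C) (f₁ : B ⟶ C₁), C₁ ∈ 𝒞 ∧ S.Inflation f₁ ∧
        (∀ D ∈ 𝒞, ∀ g : B ⟶ D, ∃ h : C₁ ⟶ D, f₁ ≫ h = g) ∧
        (∀ e : C₁ ⟶ C₁, f₁ ≫ e = f₁ → IsIso e) := by
  induction N with
  | zero => intro B Cc h; omega
  | succ N ih =>
    intro B Cc hN hCc f happrox hinfl
    by_cases hmin : ∀ e : Cc ⟶ Cc, f ≫ e = f → IsIso e
    · exact ⟨Cc, f, hCc, hinfl, happrox, hmin⟩
    · push_neg at hmin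
      obtain ⟨e, he, hne⟩ := hmin
      obtain ⟨π, hππ, hπf, hπ1⟩ := step_left k f e he hne
      obtain ⟨C₁, s, r, hsr, hrs⟩ :=
        IsIdempotentComplete.idempotents_split Cc π hππ
      have hC₁ : C₁ ∈ 𝒞 := hc hCc ⟨s, r, hsr⟩
      have hlt : finrank k (C₁ ⟶ C₁) < finrank k (Cc ⟶ Cc) :=
        finrank_lt_of_retract k s r hsr hrs hπ1
      have hfeq : (f ≫ r) ≫ s = f := by
        rw [Category.assoc, hrs, hπf]
      refine ih (by omega) hC₁ (f ≫ r) ?_ ?_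
      · intro D hD g
        obtain ⟨h, hh⟩ := happrox D hD g
        exact ⟨s ≫ h, by rw [← Category.assoc, hfeq, hh]⟩
      · exact hwic.2 (f ≫ r) s (by rw [hfeq]; exact hinfl)

end MinimalApproxAux

/-- Lemma 3.1: in a Krull–Schmidt extriangulated category with (WIC), a right
`𝒞`-approximation which is a deflation can be replaced by a minimal right
`𝒞`-approximation which is a deflation; dually for left approximations and
inflations. -/
theorem exists_minimal_approximation (k : Type*) [Field k]
    [CategoryTheory.Linear k C] [∀ A B : C, Module.Finite k (A ⟶ B)]
    [IsIdempotentComplete C]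
    (S : ExtStruct.{w} C) (hwic : S.WIC) (𝒞 : Set C) (hc : IsSummandClosed 𝒞) :
    (∀ ⦃B Cc : C⦄, Cc ∈ 𝒞 → ∀ f : Cc ⟶ B,
      (∀ D ∈ 𝒞, ∀ g : D ⟶ B, ∃ h : D ⟶ Cc, h ≫ f = g) → S.Deflation f →
      ∃ (C₁ : C) (f₁ : C₁ ⟶ B), C₁ ∈ 𝒞 ∧ S.Deflation f₁ ∧
        (∀ D ∈ 𝒞, ∀ g : D ⟶ B, ∃ h : D ⟶ C₁, h ≫ f₁ = g) ∧
        (∀ e : C₁ ⟶ C₁, e ≫ f₁ = f₁ → IsIso e)) ∧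
    (∀ ⦃B Cc : C⦄, Cc ∈ 𝒞 → ∀ f : B ⟶ Cc,
      (∀ D ∈ 𝒞, ∀ g : B ⟶ D, ∃ h : Cc ⟶ D, f ≫ h = g) → S.Inflation f →
      ∃ (C₁ : C) (f₁ : B ⟶ C₁), C₁ ∈ 𝒞 ∧ S.Inflation f₁ ∧
        (∀ D ∈ 𝒞, ∀ g : B ⟶ D, ∃ h : C₁ ⟶ D, f₁ ≫ h = g) ∧
        (∀ e : C₁ ⟶ C₁, f₁ ≫ e = f₁ → IsIso e)) := by
  constructor
  · intro B Cc hCc f happrox hdefl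
    exact right_aux k S hwic 𝒞 hc (Module.finrank k (Cc ⟶ Cc) + 1)
      (Nat.lt_succ_self _) hCc f happrox hdefl
  · intro B Cc hCc f happrox hinfl
    exact left_aux k S hwic 𝒞 hc (Module.finrank k (Cc ⟶ Cc) + 1)
      (Nat.lt_succ_self _) hCc f happrox hinfl
end

section
/- Let B be an extriangulated category, S a subcategory, and R the class of morphisms f : B → C admitting an E-triangle B →^f C → S' ⤳ with S' ∈ S. Then in the Gabriel-Zisman localization B/S := B[R⁻¹]: (1) for any object X and any S' ∈ S, the projection X ⊕ S' → X is invertible with inverse the canonical inclusion X → X ⊕ S'; (2) if f, f' : B → C and f' factors through an object of W = X ∩ Y (so that its image in B/[W] vanishes), then the images of f + f' and f in B/S coincide. -/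
open CategoryTheory CategoryTheory.Limits

universe w v u

variable {C : Type u} [Category.{v} C] [Preadditive C]

/-- Lemma 3.15 (Gabriel–Zisman localization `B/S`): (1) for any object `A` and
any `S' ∈ S`, the projection `A ⊞ S' ⟶ A` becomes invertible in `B/S`, with
inverse the canonical inclusion `A ⟶ A ⊞ S'`; (2) if `f'` factors through an
object of `W = X ∩ Y` (so `f' = 0` in `B/[W]`), then `f + f'` and `f` have the
same image in `B/S`. -/
theorem gabrielZisman_localization_basic (k : Type*) [Field k]
    [CategoryTheory.Linear k C] [∀ A B : C, Module.Finite k (A ⟶ B)]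
    [IsIdempotentComplete C] [HasBinaryBiproducts C]
    (S : ExtStruct.{w} C) (hwic : S.WIC) (X V U Y Sset : Set C)
    (htw : IsTwinCotorsionPair S X V U Y)
    (hext : S.ExtensionClosed Sset) (hctp : IsCotorsionPairIn S Sset X Y) :
    (∀ (A S' : C), S' ∈ Sset →
      IsIso ((RClass S Sset).Q.map (biprod.fst : A ⊞ S' ⟶ A)) ∧
      (RClass S Sset).Q.map (biprod.fst : A ⊞ S' ⟶ A) ≫
        (RClass S Sset).Q.map (biprod.inl : A ⟶ A ⊞ S') = 𝟙 _ ∧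
      (RClass S Sset).Q.map (biprod.inl : A ⟶ A ⊞ S') ≫
        (RClass S Sset).Q.map (biprod.fst : A ⊞ S' ⟶ A) = 𝟙 _) ∧
    (∀ ⦃B' C' : C⦄ (f f' : B' ⟶ C'), FactorsThru (X ∩ Y) f' →
      (RClass S Sset).Q.map (f + f') = (RClass S Sset).Q.map f) := by
  classical
  set Q := (RClass S Sset).Q with hQ
  -- `𝟙 S'` is a deflation as soon as some deflation onto `S'` exists.
  have key : ∀ (A S' : C), S' ∈ Sset →
      IsIso (Q.map (biprod.fst : A ⊞ S' ⟶ A)) ∧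
      Q.map (biprod.fst : A ⊞ S' ⟶ A) ≫ Q.map (biprod.inl : A ⟶ A ⊞ S') = 𝟙 _ ∧
      Q.map (biprod.inl : A ⟶ A ⊞ S') ≫ Q.map (biprod.fst : A ⊞ S' ⟶ A) = 𝟙 _ := by
    intro A S' hS'
    -- some deflation onto S'
    obtain ⟨B₀, f₀, g₀, h₀⟩ := S.tri_realize (0 : (S.E S' S' : Type _))
    have hdefl₀ : S.Deflation g₀ := ⟨_, f₀, h₀⟩
    have hid : S.Deflation (𝟙 S') := by
      apply hwic.1 g₀ (𝟙 S')
      simpa using hdefl₀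
    have hsnd : S.Deflation (biprod.snd : A ⊞ S' ⟶ S') := by
      apply hwic.1 (biprod.inr : S' ⟶ A ⊞ S') biprod.snd
      simpa using hid
    obtain ⟨A'', w, hw⟩ := hsnd
    have hwR : RClass S Sset w := ⟨S', biprod.snd, hS', hw⟩
    have hw0 : w ≫ (biprod.snd : A ⊞ S' ⟶ S') = 0 := S.tri_comp_zero _ _ hw
    have hwiso : IsIso (Q.map w) := (RClass S Sset).Q_inverts w hwR
    have hfact : (w ≫ biprod.fst) ≫ (biprod.inl : A ⟶ A ⊞ S') = w := by
      have h := biprod.total (X := A) (Y := S')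
      conv_rhs => rw [← Category.comp_id w, ← h]
      rw [Preadditive.comp_add, ← Category.assoc, ← Category.assoc, hw0, zero_comp, add_zero]
    -- Q.map inl has a left factorization through the iso Q.map w
    have hip : Q.map (biprod.inl : A ⟶ A ⊞ S') ≫ Q.map (biprod.fst : A ⊞ S' ⟶ A) = 𝟙 _ := by
      rw [← Q.map_comp, biprod.inl_fst, Q.map_id]
    have he : (inv (Q.map w) ≫ Q.map (w ≫ biprod.fst)) ≫
        Q.map (biprod.inl : A ⟶ A ⊞ S') = 𝟙 _ := by
      rw [Category.assoc, ← Q.map_comp, hfact, IsIso.inv_hom_id]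
    have hfst_eq : Q.map (biprod.fst : A ⊞ S' ⟶ A) =
        inv (Q.map w) ≫ Q.map (w ≫ biprod.fst) := by
      have : (inv (Q.map w) ≫ Q.map (w ≫ biprod.fst)) ≫
          (Q.map (biprod.inl : A ⟶ A ⊞ S') ≫ Q.map (biprod.fst : A ⊞ S' ⟶ A)) =
          (inv (Q.map w) ≫ Q.map (w ≫ biprod.fst)) := by
        rw [hip, Category.comp_id]
      calc Q.map (biprod.fst : A ⊞ S' ⟶ A)
          = 𝟙 _ ≫ Q.map (biprod.fst : A ⊞ S' ⟶ A) := by rw [Category.id_comp]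
        _ = ((inv (Q.map w) ≫ Q.map (w ≫ biprod.fst)) ≫
              Q.map (biprod.inl : A ⟶ A ⊞ S')) ≫ Q.map (biprod.fst : A ⊞ S' ⟶ A) := by
            rw [he]
        _ = inv (Q.map w) ≫ Q.map (w ≫ biprod.fst) := by
            rw [Category.assoc]; exact this
    have hpi : Q.map (biprod.fst : A ⊞ S' ⟶ A) ≫ Q.map (biprod.inl : A ⟶ A ⊞ S') = 𝟙 _ := by
      rw [hfst_eq]; exact he
    refine ⟨⟨Q.map (biprod.inl : A ⟶ A ⊞ S'), hpi, hip⟩, hpi, hip⟩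
  refine ⟨key, ?_⟩
  intro B' C' f f' hf'
  obtain ⟨W', a, b, hW, hab⟩ := hf'
  have hWS : W' ∈ Sset := hctp.subset_fst hW.1
  obtain ⟨hiso, hpi, hip⟩ := key B' W' hWS
  -- m = lift 𝟙 a  is another section of fst; in the localization it equals inl
  set m : B' ⟶ B' ⊞ W' := biprod.lift (𝟙 B') a with hm
  have hmfst : m ≫ (biprod.fst : B' ⊞ W' ⟶ B') = 𝟙 B' := by simp [hm]
  have hQm : Q.map m = Q.map (biprod.inl : B' ⟶ B' ⊞ W') := by
    calc Q.map m = Q.map m ≫ 𝟙 _ := by rw [Category.comp_id]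
      _ = Q.map m ≫ (Q.map (biprod.fst : B' ⊞ W' ⟶ B') ≫
            Q.map (biprod.inl : B' ⟶ B' ⊞ W')) := by rw [hpi]
      _ = (Q.map m ≫ Q.map (biprod.fst : B' ⊞ W' ⟶ B')) ≫
            Q.map (biprod.inl : B' ⟶ B' ⊞ W') := by rw [Category.assoc]
      _ = Q.map (biprod.inl : B' ⟶ B' ⊞ W') := by
            rw [← Q.map_comp, hmfst, Q.map_id, Category.id_comp]
  set d : B' ⊞ W' ⟶ C' := biprod.desc f b with hd
  have hmd : m ≫ d = f + f' := by
    rw [hm, hd, biprod.lift_desc, Category.id_comp, hab]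
  have hind : (biprod.inl : B' ⟶ B' ⊞ W') ≫ d = f := by simp [hd]
  calc Q.map (f + f') = Q.map (m ≫ d) := by rw [hmd]
    _ = Q.map m ≫ Q.map d := Q.map_comp _ _
    _ = Q.map (biprod.inl : B' ⟶ B' ⊞ W') ≫ Q.map d := by rw [hQm]
    _ = Q.map ((biprod.inl : B' ⟶ B' ⊞ W') ≫ d) := (Q.map_comp _ _).symm
    _ = Q.map f := by rw [hind]
end

section
/- Let B be a triangulated category with shift [1] and ((X,V),(U,Y)) a twin cotorsion pair such that X ∩ V = U ∩ Y and (U,Y) is hereditary. Then M = S_L = X * Y[1] is the unique extension-closed subcategory of B in which (X,Y) is a cotorsion pair, and M is closed under taking cones (equivalently M[1] ⊆ M). -/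
open CategoryTheory CategoryTheory.Limits

universe w v u

variable {C : Type u} [Category.{v} C] [Preadditive C]

open CategoryTheory.Pretriangulated in
/-- The canonical extriangulated structure on a triangulated category:
`E(X, A) = Hom(X, A[1])` and `𝔼`-triangles are the distinguished triangles. -/
def triExtStruct (𝒯 : Type u) [Category.{v} 𝒯] [Preadditive 𝒯] [HasZeroObject 𝒯]
    [HasShift 𝒯 ℤ] [∀ n : ℤ, (shiftFunctor 𝒯 n).Additive] [Pretriangulated 𝒯] :
    ExtStruct.{v} 𝒯 where
  E X A := AddCommGrpCat.of (X ⟶ A⟦(1 : ℤ)⟧)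
  IsTri f g := ∃ h, Triangle.mk f g h ∈ distTriang 𝒯
  tri_comp_zero _ _ h := by
    obtain ⟨δ, hδ⟩ := h
    exact comp_distTriang_mor_zero₁₂ _ hδ
  tri_realize {A X} δ := by
    obtain ⟨B, f, g, hfg⟩ := distinguished_cocone_triangle₂ (δ : X ⟶ A⟦(1 : ℤ)⟧)
    exact ⟨B, f, g, δ, hfg⟩


section Aux

open CategoryTheory.Pretriangulated CategoryTheory.Category CategoryTheory.Preadditive ZeroObject

set_option linter.unusedSectionVars false

variable {𝒯 : Type u} [Category.{v} 𝒯] [Preadditive 𝒯] [HasZeroObject 𝒯]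
    [HasShift 𝒯 ℤ] [∀ n : ℤ, (shiftFunctor 𝒯 n).Additive] [Pretriangulated 𝒯]
variable {𝒳 𝒱 𝒰 𝒴 : Set 𝒯}

namespace TwinAux

lemma ext_zero {𝒜 ℬ : Set 𝒯} (h : (triExtStruct 𝒯).ExtVanish 𝒜 ℬ)
    {A B : 𝒯} (hA : A ∈ 𝒜) (hB : B ∈ ℬ) (φ : A ⟶ B⟦(1 : ℤ)⟧) : φ = 0 :=
  h A hA B hB φ

section ExactTools

variable {A₁ B₁ C₁ : 𝒯} {f₁ : A₁ ⟶ B₁} {g₁ : B₁ ⟶ C₁} {h₁ : C₁ ⟶ A₁⟦(1 : ℤ)⟧}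
variable (hT : Triangle.mk f₁ g₁ h₁ ∈ distTriang 𝒯)
include hT

lemma co₂ {Z : 𝒯} (f : Z ⟶ B₁) (hf : f ≫ g₁ = 0) : ∃ g : Z ⟶ A₁, f = g ≫ f₁ :=
  Triangle.coyoneda_exact₂ _ hT f hf

lemma co₃ {Z : 𝒯} (f : Z ⟶ C₁) (hf : f ≫ h₁ = 0) : ∃ g : Z ⟶ B₁, f = g ≫ g₁ :=
  Triangle.coyoneda_exact₃ _ hT f hf

lemma co₁ {Z : 𝒯} (f : Z ⟶ A₁⟦(1 : ℤ)⟧) (hf : f ≫ f₁⟦(1 : ℤ)⟧' = 0) :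
    ∃ g : Z ⟶ C₁, f = g ≫ h₁ :=
  Triangle.coyoneda_exact₁ _ hT f hf

lemma yo₂ {Z : 𝒯} (f : B₁ ⟶ Z) (hf : f₁ ≫ f = 0) : ∃ g : C₁ ⟶ Z, f = g₁ ≫ g :=
  Triangle.yoneda_exact₂ _ hT f hf

/-- Exactness of `Hom(Z, -)` at position `B₁⟦1⟧`. -/
lemma sco₁ {Z : 𝒯} (f : Z ⟶ B₁⟦(1 : ℤ)⟧) (hf : f ≫ g₁⟦(1 : ℤ)⟧' = 0) :
    ∃ g : Z ⟶ A₁⟦(1 : ℤ)⟧, f = g ≫ f₁⟦(1 : ℤ)⟧' := by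
  have hT3 := rot_of_distTriang _ (rot_of_distTriang _ (rot_of_distTriang _ hT))
  obtain ⟨g, hg⟩ : ∃ g : Z ⟶ A₁⟦(1 : ℤ)⟧, f = g ≫ (-(f₁⟦(1 : ℤ)⟧')) :=
    Triangle.coyoneda_exact₂ _ hT3 f
    (by show f ≫ (-(g₁⟦(1 : ℤ)⟧')) = 0; rw [comp_neg, hf, neg_zero])
  refine ⟨-g, ?_⟩
  rw [hg, comp_neg, neg_comp]

/-- Exactness of `Hom(Z, -)` at position `C₁⟦1⟧`. -/
lemma sco₂ {Z : 𝒯} (f : Z ⟶ C₁⟦(1 : ℤ)⟧) (hf : f ≫ h₁⟦(1 : ℤ)⟧' = 0) :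
    ∃ g : Z ⟶ B₁⟦(1 : ℤ)⟧, f = g ≫ g₁⟦(1 : ℤ)⟧' := by
  have hT4 := rot_of_distTriang _
    (rot_of_distTriang _ (rot_of_distTriang _ (rot_of_distTriang _ hT)))
  obtain ⟨g, hg⟩ : ∃ g : Z ⟶ B₁⟦(1 : ℤ)⟧, f = g ≫ (-(g₁⟦(1 : ℤ)⟧')) :=
    Triangle.coyoneda_exact₂ _ hT4 f
    (by show f ≫ (-(h₁⟦(1 : ℤ)⟧')) = 0; rw [comp_neg, hf, neg_zero])
  refine ⟨-g, ?_⟩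
  rw [hg, comp_neg, neg_comp]

end ExactTools

lemma zero_mem {𝒜 : Set 𝒯} (hcl : IsSummandClosed 𝒜) {Z : 𝒯} (hZ : Z ∈ 𝒜) :
    (0 : 𝒯) ∈ 𝒜 :=
  hcl hZ ⟨0, 0, (Limits.isZero_zero 𝒯).eq_of_src _ _⟩

/-- Membership in the left class of a cotorsion pair from Ext-orthogonality. -/
lemma mem_fst_of_orth (hXV : IsCotorsionPair (triExtStruct 𝒯) 𝒳 𝒱) {Z : 𝒯}
    (h : ∀ V' ∈ 𝒱, ∀ φ : Z ⟶ V'⟦(1 : ℤ)⟧, φ = 0) : Z ∈ 𝒳 := by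
  obtain ⟨VB, XB, f, g, hV, hX, hh, hT⟩ := hXV.approx_fst Z
  obtain ⟨s, hs⟩ := co₃ hT (𝟙 Z) (by rw [id_comp]; exact h VB hV hh)
  exact hXV.summands_fst hX ⟨s, g, hs.symm⟩

/-- Membership in the right class of a cotorsion pair from Ext-orthogonality. -/
lemma mem_snd_of_orth (hUY : IsCotorsionPair (triExtStruct 𝒯) 𝒰 𝒴) {Z : 𝒯}
    (h : ∀ A ∈ 𝒰, ∀ φ : A ⟶ Z⟦(1 : ℤ)⟧, φ = 0) : Z ∈ 𝒴 := by
  obtain ⟨VB, UB, f, g, hYv, hU, hh, hT⟩ := hUY.approx_snd Z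
  have h0 : hh = 0 := h UB hU hh
  obtain ⟨p, hp⟩ := Triangle.yoneda_exact₂ _ (inv_rot_of_distTriang _ hT) (𝟙 Z)
    (by show (-(hh⟦(-1 : ℤ)⟧') ≫ (shiftEquiv 𝒯 (1 : ℤ)).unitIso.inv.app Z) ≫ 𝟙 Z = 0; rw [h0]; simp)
  exact hUY.summands_snd hYv ⟨f, p, hp.symm⟩

/-- The right class of a hereditary cotorsion pair is stable under shift. -/
lemma shift_mem_snd (hUY : IsCotorsionPair (triExtStruct 𝒯) 𝒰 𝒴)
    (hher : IsHereditaryPair (triExtStruct 𝒯) 𝒰 𝒴) {Y' : 𝒯} (hY' : Y' ∈ 𝒴) :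
    Y'⟦(1 : ℤ)⟧ ∈ 𝒴 := by
  have h0 : (0 : 𝒯) ∈ 𝒴 := zero_mem hUY.summands_snd hY'
  exact hher.2 (0 : Y' ⟶ 0) (0 : (0 : 𝒯) ⟶ Y'⟦(1 : ℤ)⟧)
    ⟨𝟙 (Y'⟦(1 : ℤ)⟧), contractible_distinguished₂ Y'⟩ hY' h0

lemma zero_mem_snd (hUY : IsCotorsionPair (triExtStruct 𝒯) 𝒰 𝒴) : (0 : 𝒯) ∈ 𝒴 := by
  obtain ⟨VB, UB, f, g, hV, hU, _⟩ := hUY.approx_fst (0 : 𝒯)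
  exact zero_mem hUY.summands_snd hV

/-- `X ⊆ S_L`. -/
lemma fst_subset_SL (hUY : IsCotorsionPair (triExtStruct 𝒯) 𝒰 𝒴) {X' : 𝒯}
    (hX' : X' ∈ 𝒳) : X' ∈ SLm (triExtStruct 𝒯) 𝒳 𝒴 :=
  ⟨0, X', 0, 𝟙 X', zero_mem_snd hUY, hX', 0, contractible_distinguished₁ X'⟩

/-- `Y ⊆ S_L`. -/
lemma snd_subset_SL (hXV : IsCotorsionPair (triExtStruct 𝒯) 𝒳 𝒱)
    (hUY : IsCotorsionPair (triExtStruct 𝒯) 𝒰 𝒴)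
    (hW : 𝒳 ∩ 𝒱 = 𝒰 ∩ 𝒴) {Y' : 𝒯} (hY' : Y' ∈ 𝒴) :
    Y' ∈ SLm (triExtStruct 𝒯) 𝒳 𝒴 := by
  obtain ⟨Y₁, U₁, f, g, hY₁, hU₁, hh, hT⟩ := hUY.approx_fst Y'
  have hU₁Y : U₁ ∈ 𝒴 := by
    apply mem_snd_of_orth hUY
    intro A'' hA'' φ
    have h1 : φ ≫ g⟦(1 : ℤ)⟧' = 0 :=
      ext_zero hUY.ext_vanish hA'' hY' (φ ≫ g⟦(1 : ℤ)⟧')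
    obtain ⟨ε, hε⟩ := sco₁ hT φ h1
    rw [hε, ext_zero hUY.ext_vanish hA'' hY₁ ε, zero_comp]
  have hU₁X : U₁ ∈ 𝒳 := by
    have : U₁ ∈ 𝒳 ∩ 𝒱 := by rw [hW]; exact ⟨hU₁, hU₁Y⟩
    exact this.1
  exact ⟨Y₁, U₁, f, g, hY₁, hU₁X, hh, hT⟩

/-- KEY: `X'⟦1⟧ ∈ S_L` for `X' ∈ X`. -/
lemma key_shift_fst_SL (hXV : IsCotorsionPair (triExtStruct 𝒯) 𝒳 𝒱)
    (hW : 𝒳 ∩ 𝒱 = 𝒰 ∩ 𝒴) {X' : 𝒯} (hX' : X' ∈ 𝒳) :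
    X'⟦(1 : ℤ)⟧ ∈ SLm (triExtStruct 𝒯) 𝒳 𝒴 := by
  obtain ⟨V₂, X₂, f, g, hV₂, hX₂, hh, hT⟩ := hXV.approx_fst (X'⟦(1 : ℤ)⟧)
  have hV₂X : V₂ ∈ 𝒳 := by
    apply mem_fst_of_orth hXV
    intro V' hV' φ
    have hzero : (Triangle.mk f g hh).invRotate.mor₁ ≫ φ = 0 := by
      set α := (Triangle.mk f g hh).invRotate.mor₁ ≫ φ with hα
      have e := (shiftEquiv 𝒯 (1 : ℤ)).unitIso.app X'
      have h1 : e.hom ≫ α = 0 :=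
        ext_zero hXV.ext_vanish hX' hV' (e.hom ≫ α)
      have h2 := congrArg (fun t => e.inv ≫ t) h1
      exact (cancel_epi e.hom).1 (h1.trans comp_zero.symm)
    obtain ⟨ψ, hψ⟩ := Triangle.yoneda_exact₂ _ (inv_rot_of_distTriang _ hT) φ hzero
    change φ = f ≫ ψ at hψ
    rw [hψ, ext_zero hXV.ext_vanish hX₂ hV' ψ, comp_zero]
  have hV₂Y : V₂ ∈ 𝒴 := by
    have : V₂ ∈ 𝒰 ∩ 𝒴 := by rw [← hW]; exact ⟨hV₂X, hV₂⟩
    exact this.2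
  exact ⟨V₂, X₂, f, g, hV₂Y, hX₂, hh, hT⟩

/-- If a deflation `q` has the two lifting properties with respect to `𝒰`,
then the fiber of any triangle on `q` lies in `𝒴`. -/
lemma fiber_mem_snd (hUY : IsCotorsionPair (triExtStruct 𝒯) 𝒰 𝒴)
    {Q B N : 𝒯} {n : N ⟶ Q} {q : Q ⟶ B} {ν : B ⟶ N⟦(1 : ℤ)⟧}
    (hT : Triangle.mk n q ν ∈ distTriang 𝒯)
    (hI : ∀ A'' ∈ 𝒰, ∀ ρ : A'' ⟶ B, ∃ ρ' : A'' ⟶ Q, ρ' ≫ q = ρ)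
    (hII : ∀ A'' ∈ 𝒰, ∀ ψ : A'' ⟶ Q⟦(1 : ℤ)⟧, ψ ≫ q⟦(1 : ℤ)⟧' = 0 → ψ = 0) :
    N ∈ 𝒴 := by
  apply mem_snd_of_orth hUY
  intro A'' hA'' φ
  have hnq : n ≫ q = 0 := comp_distTriang_mor_zero₁₂ _ hT
  have hqν : q ≫ ν = 0 := comp_distTriang_mor_zero₂₃ _ hT
  have h1 : (φ ≫ n⟦(1 : ℤ)⟧') ≫ q⟦(1 : ℤ)⟧' = 0 := by
    rw [assoc, ← Functor.map_comp, hnq, Functor.map_zero, comp_zero]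
  have h2 : φ ≫ n⟦(1 : ℤ)⟧' = 0 := hII A'' hA'' _ h1
  obtain ⟨ρ, hρ⟩ := co₁ hT φ h2
  obtain ⟨ρ', hρ'⟩ := hI A'' hA'' ρ
  rw [hρ, ← hρ', assoc, hqν, comp_zero]

/-- Extensions of objects of `X` by objects of `S_L` lie in `S_L`. -/
lemma ax_mem (hXV : IsCotorsionPair (triExtStruct 𝒯) 𝒳 𝒱)
    (hUY : IsCotorsionPair (triExtStruct 𝒯) 𝒰 𝒴)
    (hXU : 𝒳 ⊆ 𝒰)
    (hher : IsHereditaryPair (triExtStruct 𝒯) 𝒰 𝒴)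
    {A P X'' : 𝒯} (hA : A ∈ SLm (triExtStruct 𝒯) 𝒳 𝒴) (hX'' : X'' ∈ 𝒳)
    {i : A ⟶ P} {π : P ⟶ X''} {μ : X'' ⟶ A⟦(1 : ℤ)⟧}
    (hTP : Triangle.mk i π μ ∈ distTriang 𝒯) :
    P ∈ SLm (triExtStruct 𝒯) 𝒳 𝒴 := by
  obtain ⟨Y_A, X_A, yA, pA, hYA, hXA, hA3, hTA⟩ := hA
  have hobs : μ ≫ hA3⟦(1 : ℤ)⟧' = 0 :=
    ext_zero hUY.ext_vanish (hXU hX'') (shift_mem_snd hUY hher hYA) _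
  obtain ⟨θ, hθ⟩ := sco₂ hTA μ hobs
  obtain ⟨Xt, iX, jX, hT1⟩ := distinguished_cocone_triangle₂ θ
  have hXt : Xt ∈ 𝒳 := by
    apply mem_fst_of_orth hXV
    intro V' hV' φ
    have h1 : iX ≫ φ = 0 := ext_zero hXV.ext_vanish hXA hV' _
    obtain ⟨φ', hφ'⟩ := yo₂ hT1 φ h1
    rw [hφ', ext_zero hXV.ext_vanish hX'' hV' φ', comp_zero]
  have hT1r := rot_of_distTriang _ (rot_of_distTriang _ hT1)
  have hTPr := rot_of_distTriang _ (rot_of_distTriang _ hTP)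
  obtain ⟨c, hc1, hc2⟩ := complete_distinguished_triangle_morphism _ _ hT1r hTPr
    (𝟙 X'') (pA⟦(1 : ℤ)⟧') (by show θ ≫ pA⟦(1 : ℤ)⟧' = 𝟙 X'' ≫ μ; rw [id_comp, ← hθ])
  have hc1' : iX⟦(1 : ℤ)⟧' ≫ c = pA⟦(1 : ℤ)⟧' ≫ i⟦(1 : ℤ)⟧' := by
    change (-(iX⟦(1 : ℤ)⟧')) ≫ c = pA⟦(1 : ℤ)⟧' ≫ (-(i⟦(1 : ℤ)⟧')) at hc1
    simp only [neg_comp, comp_neg, neg_inj] at hc1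
    exact neg_inj.mp ((neg_comp _ c).symm.trans hc1)
  have hc2' : c ≫ π⟦(1 : ℤ)⟧' = jX⟦(1 : ℤ)⟧' := by
    change (-(jX⟦(1 : ℤ)⟧')) ≫ (𝟙 X'')⟦(1 : ℤ)⟧' = c ≫ (-(π⟦(1 : ℤ)⟧')) at hc2
    simp only [CategoryTheory.Functor.map_id] at hc2
    simp only [comp_id, neg_comp, comp_neg, neg_inj] at hc2
    exact neg_inj.mp ((comp_neg c _).symm.trans hc2.symm)
  set q : Xt ⟶ P := (shiftFunctor 𝒯 (1 : ℤ)).preimage c with hqdef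
  have hqc : (shiftFunctor 𝒯 (1 : ℤ)).map q = c :=
    (shiftFunctor 𝒯 (1 : ℤ)).map_preimage c
  have hiq : iX ≫ q = pA ≫ i := by
    apply (shiftFunctor 𝒯 (1 : ℤ)).map_injective
    rw [Functor.map_comp, Functor.map_comp, hqc]
    exact hc1'
  have hqπ : q ≫ π = jX := by
    apply (shiftFunctor 𝒯 (1 : ℤ)).map_injective
    rw [Functor.map_comp, hqc]
    exact hc2'
  have hI : ∀ A'' ∈ 𝒰, ∀ ρ : A'' ⟶ P, ∃ ρ' : A'' ⟶ Xt, ρ' ≫ q = ρ := by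
    intro A'' hA'' ρ
    have hπμ : π ≫ μ = 0 := comp_distTriang_mor_zero₂₃ _ hTP
    have h1 : (π ≫ θ) ≫ pA⟦(1 : ℤ)⟧' = 0 := by rw [assoc, ← hθ, hπμ]
    obtain ⟨ϑ, hϑ⟩ := sco₁ hTA (π ≫ θ) h1
    have h2 : (ρ ≫ π) ≫ θ = 0 := by
      rw [assoc, hϑ, ← assoc, ext_zero hUY.ext_vanish hA'' hYA (ρ ≫ ϑ), zero_comp]
    obtain ⟨σ, hσ⟩ := co₃ hT1 (ρ ≫ π) h2
    have h3 : (ρ - σ ≫ q) ≫ π = 0 := by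
      rw [sub_comp, assoc, hqπ, ← hσ, sub_self]
    obtain ⟨τ, hτ⟩ := co₂ hTP (ρ - σ ≫ q) h3
    have h4 : τ ≫ hA3 = 0 := ext_zero hUY.ext_vanish hA'' hYA _
    obtain ⟨τ', hτ'⟩ := co₃ hTA τ h4
    refine ⟨σ + τ' ≫ iX, ?_⟩
    rw [add_comp, assoc, hiq, ← assoc, ← hτ', ← hτ]
    abel
  have hII : ∀ A'' ∈ 𝒰, ∀ ψ : A'' ⟶ Xt⟦(1 : ℤ)⟧, ψ ≫ q⟦(1 : ℤ)⟧' = 0 → ψ = 0 := by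
    intro A'' hA'' ψ hψ0
    have h1 : ψ ≫ jX⟦(1 : ℤ)⟧' = 0 := by
      rw [← hqπ, Functor.map_comp, ← assoc, hψ0, zero_comp]
    obtain ⟨ψ', hψ'⟩ := sco₁ hT1 ψ h1
    have h2 : (ψ' ≫ pA⟦(1 : ℤ)⟧') ≫ i⟦(1 : ℤ)⟧' = 0 := by
      rw [assoc, ← Functor.map_comp, ← hiq, Functor.map_comp, ← assoc, ← hψ', hψ0]
    obtain ⟨κ, hκ⟩ := co₁ hTP (ψ' ≫ pA⟦(1 : ℤ)⟧') h2
    have h3 : (ψ' - κ ≫ θ) ≫ pA⟦(1 : ℤ)⟧' = 0 := by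
      rw [sub_comp, assoc, ← hθ, ← hκ, sub_self]
    obtain ⟨ε, hε⟩ := sco₁ hTA (ψ' - κ ≫ θ) h3
    have hψ'' : ψ' = κ ≫ θ := by
      rw [ext_zero hUY.ext_vanish hA'' hYA ε, zero_comp] at hε
      exact sub_eq_zero.mp hε
    have hθiX : θ ≫ iX⟦(1 : ℤ)⟧' = 0 := comp_distTriang_mor_zero₃₁ _ hT1
    rw [hψ', hψ'', assoc, hθiX, comp_zero]
  obtain ⟨N, nN, νN, hTN⟩ := distinguished_cocone_triangle₁ q
  have hN : N ∈ 𝒴 := fiber_mem_snd hUY hTN hI hII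
  exact ⟨N, Xt, nN, q, hN, hXt, νN, hTN⟩

/-- `S_L` is extension closed. -/
lemma ext_closed_SL (hXV : IsCotorsionPair (triExtStruct 𝒯) 𝒳 𝒱)
    (hUY : IsCotorsionPair (triExtStruct 𝒯) 𝒰 𝒴)
    (hXU : 𝒳 ⊆ 𝒰)
    (hher : IsHereditaryPair (triExtStruct 𝒯) 𝒰 𝒴) :
    (triExtStruct 𝒯).ExtensionClosed (SLm (triExtStruct 𝒯) 𝒳 𝒴) := by
  rintro A B C a b ⟨δ, hTB⟩ hA hC
  obtain ⟨Y_C, X_C, yC, x, hYC, hXC, hC3, hTC⟩ := hC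
  obtain ⟨P, i, π, hTP⟩ := distinguished_cocone_triangle₂ (x ≫ δ)
  have hP : P ∈ SLm (triExtStruct 𝒯) 𝒳 𝒴 := ax_mem hXV hUY hXU hher hA hXC hTP
  have hTPr := rot_of_distTriang _ (rot_of_distTriang _ hTP)
  have hTBr := rot_of_distTriang _ (rot_of_distTriang _ hTB)
  obtain ⟨c, hc1, hc2⟩ := complete_distinguished_triangle_morphism _ _ hTPr hTBr
    x (𝟙 (A⟦(1 : ℤ)⟧)) (by show (x ≫ δ) ≫ 𝟙 (A⟦(1 : ℤ)⟧) = x ≫ δ; rw [comp_id])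
  have hc1' : i⟦(1 : ℤ)⟧' ≫ c = a⟦(1 : ℤ)⟧' := by
    change (-(i⟦(1 : ℤ)⟧')) ≫ c = 𝟙 (A⟦(1 : ℤ)⟧) ≫ (-(a⟦(1 : ℤ)⟧')) at hc1
    simp only [id_comp, neg_comp, comp_neg, neg_inj] at hc1
    exact neg_inj.mp ((neg_comp _ c).symm.trans hc1)
  have hc2' : c ≫ b⟦(1 : ℤ)⟧' = π⟦(1 : ℤ)⟧' ≫ x⟦(1 : ℤ)⟧' := by
    change (-(π⟦(1 : ℤ)⟧')) ≫ x⟦(1 : ℤ)⟧' = c ≫ (-(b⟦(1 : ℤ)⟧')) at hc2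
    simp only [neg_comp, comp_neg, neg_inj] at hc2
    exact neg_inj.mp ((comp_neg c _).symm.trans hc2.symm)
  set r : P ⟶ B := (shiftFunctor 𝒯 (1 : ℤ)).preimage c with hrdef
  have hrc : (shiftFunctor 𝒯 (1 : ℤ)).map r = c :=
    (shiftFunctor 𝒯 (1 : ℤ)).map_preimage c
  have hir : i ≫ r = a := by
    apply (shiftFunctor 𝒯 (1 : ℤ)).map_injective
    rw [Functor.map_comp, hrc]
    exact hc1'
  have hrb : r ≫ b = π ≫ x := by
    apply (shiftFunctor 𝒯 (1 : ℤ)).map_injective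
    rw [Functor.map_comp, Functor.map_comp, hrc]
    exact hc2'
  have hbδ : b ≫ δ = 0 := comp_distTriang_mor_zero₂₃ _ hTB
  have hIr : ∀ A'' ∈ 𝒰, ∀ ρ : A'' ⟶ B, ∃ ρ' : A'' ⟶ P, ρ' ≫ r = ρ := by
    intro A'' hA'' ρ
    have h1 : (ρ ≫ b) ≫ hC3 = 0 := ext_zero hUY.ext_vanish hA'' hYC _
    obtain ⟨σ, hσ⟩ := co₃ hTC (ρ ≫ b) h1
    have h2 : σ ≫ (x ≫ δ) = 0 := by
      rw [← assoc, ← hσ, assoc, hbδ, comp_zero]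
    obtain ⟨ρ₁, hρ₁⟩ := co₃ hTP σ h2
    have h3 : (ρ - ρ₁ ≫ r) ≫ b = 0 := by
      rw [sub_comp, assoc, hrb, ← assoc, ← hρ₁, ← hσ, sub_self]
    obtain ⟨τ, hτ⟩ := co₂ hTB (ρ - ρ₁ ≫ r) h3
    refine ⟨ρ₁ + τ ≫ i, ?_⟩
    rw [add_comp, assoc, hir, ← hτ]
    abel
  have hIIr : ∀ A'' ∈ 𝒰, ∀ ψ : A'' ⟶ P⟦(1 : ℤ)⟧, ψ ≫ r⟦(1 : ℤ)⟧' = 0 → ψ = 0 := by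
    intro A'' hA'' ψ hψ0
    rw [hrc] at hψ0
    have h1 : (ψ ≫ π⟦(1 : ℤ)⟧') ≫ x⟦(1 : ℤ)⟧' = 0 := by
      rw [assoc, ← hc2']
      exact (assoc ψ c _).symm.trans
        ((congrArg (fun t => t ≫ b⟦(1 : ℤ)⟧') hψ0).trans zero_comp)
    have h2 : ψ ≫ π⟦(1 : ℤ)⟧' = 0 := by
      obtain ⟨ε, hε⟩ := sco₁ hTC (ψ ≫ π⟦(1 : ℤ)⟧') h1
      rw [hε, ext_zero hUY.ext_vanish hA'' hYC ε, zero_comp]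
    obtain ⟨χ, hχ⟩ := sco₁ hTP ψ h2
    have h3 : χ ≫ a⟦(1 : ℤ)⟧' = 0 := by
      rw [← hc1']
      exact (assoc χ _ c).symm.trans ((congrArg (fun t => t ≫ c) hχ.symm).trans hψ0)
    obtain ⟨ω, hω⟩ := co₁ hTB χ h3
    have h4 : ω ≫ hC3 = 0 := ext_zero hUY.ext_vanish hA'' hYC _
    obtain ⟨ω', hω'⟩ := co₃ hTC ω h4
    have h5 : (x ≫ δ) ≫ i⟦(1 : ℤ)⟧' = 0 := comp_distTriang_mor_zero₃₁ _ hTP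
    rw [hχ, hω, hω', assoc, assoc, ← assoc x δ ((shiftFunctor 𝒯 (1 : ℤ)).map i),
      h5, comp_zero]
  obtain ⟨Y_P, X_P, nP, qP, hYP, hXP, νP, hTQP⟩ := hP
  obtain ⟨N, nN, νN, hTN⟩ := distinguished_cocone_triangle₁ (qP ≫ r)
  have hIc : ∀ A'' ∈ 𝒰, ∀ ρ : A'' ⟶ B, ∃ ρ' : A'' ⟶ X_P, ρ' ≫ (qP ≫ r) = ρ := by
    intro A'' hA'' ρ
    obtain ⟨ρ₀, hρ₀⟩ := hIr A'' hA'' ρ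
    have h1 : ρ₀ ≫ νP = 0 := ext_zero hUY.ext_vanish hA'' hYP _
    obtain ⟨ρ₂, hρ₂⟩ := co₃ hTQP ρ₀ h1
    exact ⟨ρ₂, by rw [← assoc, ← hρ₂, hρ₀]⟩
  have hIIc : ∀ A'' ∈ 𝒰, ∀ ψ : A'' ⟶ X_P⟦(1 : ℤ)⟧,
      ψ ≫ (qP ≫ r)⟦(1 : ℤ)⟧' = 0 → ψ = 0 := by
    intro A'' hA'' ψ hψ0
    rw [Functor.map_comp, ← assoc] at hψ0
    have h2 : ψ ≫ qP⟦(1 : ℤ)⟧' = 0 := hIIr A'' hA'' _ hψ0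
    obtain ⟨ε, hε⟩ := sco₁ hTQP ψ h2
    rw [hε, ext_zero hUY.ext_vanish hA'' hYP ε, zero_comp]
  have hN : N ∈ 𝒴 := fiber_mem_snd hUY hTN hIc hIIc
  exact ⟨N, X_P, nN, qP ≫ r, hN, hXP, νN, hTN⟩

/-- `S_L` is stable under the shift. -/
lemma shift_mem_SL (hXV : IsCotorsionPair (triExtStruct 𝒯) 𝒳 𝒱)
    (hUY : IsCotorsionPair (triExtStruct 𝒯) 𝒰 𝒴)
    (hXU : 𝒳 ⊆ 𝒰) (hW : 𝒳 ∩ 𝒱 = 𝒰 ∩ 𝒴)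
    (hher : IsHereditaryPair (triExtStruct 𝒯) 𝒰 𝒴)
    {B : 𝒯} (hB : B ∈ SLm (triExtStruct 𝒯) 𝒳 𝒴) :
    B⟦(1 : ℤ)⟧ ∈ SLm (triExtStruct 𝒯) 𝒳 𝒴 := by
  obtain ⟨Y₀, X₀, f₀, g₀, hY₀, hX₀, h₀, hT⟩ := hB
  have hT4 := rot_of_distTriang _ (rot_of_distTriang _
    (rot_of_distTriang _ (rot_of_distTriang _ hT)))
  have h1 : X₀⟦(1 : ℤ)⟧ ∈ SLm (triExtStruct 𝒯) 𝒳 𝒴 := key_shift_fst_SL hXV hW hX₀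
  have h2 : (Y₀⟦(1 : ℤ)⟧)⟦(1 : ℤ)⟧ ∈ SLm (triExtStruct 𝒯) 𝒳 𝒴 :=
    snd_subset_SL hXV hUY hW (shift_mem_snd hUY hher (shift_mem_snd hUY hher hY₀))
  exact ext_closed_SL hXV hUY hXU hher
    ((Triangle.mk f₀ g₀ h₀).rotate.rotate.rotate.rotate.mor₁)
    ((Triangle.mk f₀ g₀ h₀).rotate.rotate.rotate.rotate.mor₂)
    ⟨(Triangle.mk f₀ g₀ h₀).rotate.rotate.rotate.rotate.mor₃, hT4⟩ h1 h2

/-- Coapproximation triangles for objects of `S_L`. -/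
lemma coapprox_SL (hXV : IsCotorsionPair (triExtStruct 𝒯) 𝒳 𝒱)
    (hUY : IsCotorsionPair (triExtStruct 𝒯) 𝒰 𝒴)
    (hXU : 𝒳 ⊆ 𝒰) (hW : 𝒳 ∩ 𝒱 = 𝒰 ∩ 𝒴)
    (hher : IsHereditaryPair (triExtStruct 𝒯) 𝒰 𝒴)
    {B : 𝒯} (hB : B ∈ SLm (triExtStruct 𝒯) 𝒳 𝒴) :
    ∃ (YB XB : 𝒯) (f : B ⟶ YB) (g : YB ⟶ XB), YB ∈ 𝒴 ∧ XB ∈ 𝒳 ∧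
      (triExtStruct 𝒯).IsTri f g := by
  obtain ⟨Y', X', f', g', hY', hX', h', hT'⟩ := shift_mem_SL hXV hUY hXU hW hher hB
  have hinv := inv_rot_of_distTriang _ hT'
  set e := (shiftEquiv 𝒯 (1 : ℤ)).unitIso.app B with hedef
  refine ⟨Y', X', e.hom ≫ (Triangle.mk f' g' h').invRotate.mor₁, f', hY', hX',
    (Triangle.mk f' g' h').invRotate.mor₃ ≫ e.inv⟦(1 : ℤ)⟧', ?_⟩
  refine isomorphic_distinguished _ hinv _ ?_
  refine Triangle.isoMk _ _ e (Iso.refl _) (Iso.refl _) (comp_id _)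
    ((comp_id _).trans (id_comp _).symm) ?_
  show ((Triangle.mk f' g' h').invRotate.mor₃ ≫ e.inv⟦(1 : ℤ)⟧') ≫ e.hom⟦(1 : ℤ)⟧' =
    𝟙 _ ≫ (Triangle.mk f' g' h').invRotate.mor₃
  have hee : e.inv⟦(1 : ℤ)⟧' ≫ e.hom⟦(1 : ℤ)⟧' = 𝟙 _ := by
    rw [← Functor.map_comp, Iso.inv_hom_id, CategoryTheory.Functor.map_id]
  exact (assoc _ _ _).trans ((congrArg (fun t => (Triangle.mk f' g' h').invRotate.mor₃ ≫ t)
    hee).trans ((comp_id _).trans (id_comp _).symm))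

end TwinAux

end Aux

open CategoryTheory.Pretriangulated in
/-- Proposition 3.31: in a triangulated category, if `((X, V), (U, Y))` is a
twin cotorsion pair with `X ∩ V = U ∩ Y` such that `(U, Y)` is hereditary,
then `M = S_L = X * Y[1]` is the unique extension closed subcategory in which
`(X, Y)` is a cotorsion pair, and `M` is closed under taking cones
(equivalently, `M[1] ⊆ M`). -/
theorem triangulated_unique_extensionClosed (𝒯 : Type u) [Category.{v} 𝒯]
    [Preadditive 𝒯] [HasZeroObject 𝒯] [HasShift 𝒯 ℤ]
    [∀ n : ℤ, (shiftFunctor 𝒯 n).Additive] [Pretriangulated 𝒯]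
    (k : Type*) [Field k] [CategoryTheory.Linear k 𝒯]
    [∀ A B : 𝒯, Module.Finite k (A ⟶ B)] [IsIdempotentComplete 𝒯]
    (X V U Y : Set 𝒯)
    (htw : IsTwinCotorsionPair (triExtStruct 𝒯) X V U Y)
    (hW : X ∩ V = U ∩ Y)
    (hher : IsHereditaryPair (triExtStruct 𝒯) U Y) :
    IsCotorsionPairIn (triExtStruct 𝒯) (SLm (triExtStruct 𝒯) X Y) X Y ∧
    (triExtStruct 𝒯).ExtensionClosed (SLm (triExtStruct 𝒯) X Y) ∧
    (∀ M : Set 𝒯, (triExtStruct 𝒯).ExtensionClosed M →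
      IsCotorsionPairIn (triExtStruct 𝒯) M X Y → M = SLm (triExtStruct 𝒯) X Y) ∧
    (triExtStruct 𝒯).ConesClosed (SLm (triExtStruct 𝒯) X Y) ∧
    (∀ A ∈ SLm (triExtStruct 𝒯) X Y, A⟦(1 : ℤ)⟧ ∈ SLm (triExtStruct 𝒯) X Y) := by
  have hXV := htw.fst
  have hUY := htw.snd
  have hXU := htw.subset
  refine ⟨⟨?_, ?_, ?_, ?_, ?_, ?_, ?_⟩, ?_, ?_, ?_, ?_⟩
  · intro X' hX'
    exact TwinAux.fst_subset_SL hUY hX'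
  · intro Y' hY'
    exact TwinAux.snd_subset_SL hXV hUY hW hY'
  · intro A B _ hB hsum
    exact hXV.summands_fst hB hsum
  · intro A B _ hB hsum
    exact hUY.summands_snd hB hsum
  · intro X' hX' A hA δ
    exact hUY.ext_vanish X' (hXU hX') A hA δ
  · intro B hB
    exact hB
  · intro B hB
    exact TwinAux.coapprox_SL hXV hUY hXU hW hher hB
  · exact TwinAux.ext_closed_SL hXV hUY hXU hher
  · intro M hMext hMcp
    apply Set.Subset.antisymm
    · intro B hB
      obtain ⟨YB, XB, f, g, hY, hX, hT⟩ := hMcp.approx_fst B hB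
      exact ⟨YB, XB, f, g, hY, hX, hT⟩
    · rintro B ⟨Y₀, X₀, f₀, g₀, hY₀, hX₀, h₀, hT⟩
      have hrot := Pretriangulated.rot_of_distTriang _ hT
      exact hMext g₀ h₀ ⟨-(f₀⟦(1 : ℤ)⟧'), hrot⟩ (hMcp.subset_fst hX₀)
        (hMcp.subset_snd (TwinAux.shift_mem_snd hUY hher hY₀))
  · intro A B C f g hfg hA hB
    obtain ⟨h, hT⟩ := hfg
    have hrot := Pretriangulated.rot_of_distTriang _ hT
    exact TwinAux.ext_closed_SL hXV hUY hXU hher g h ⟨-(f⟦(1 : ℤ)⟧'), hrot⟩ hB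
      (TwinAux.shift_mem_SL hXV hUY hXU hW hher hA)
  · intro A hA
    exact TwinAux.shift_mem_SL hXV hUY hXU hW hher hA
end
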